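/- (Iterated Johnson bound) Let q be a prime power and let n, k, δ be integers with 0 ≤ δ ≤ k ≤ n. Then A_q(n, 2δ+2, k) ≤ ⌊((q^n−1)/(q^k−1)) · ⌊((q^{n−1}−1)/(q^{k−1}−1)) · ⌊ ⋯ ⌊(q^{n−k+δ+1}−1)/(q^{δ+1}−1)⌋ ⋯ ⌋⌋⌋, where the nested floors are taken over the k−δ factors (q^{n−i}−1)/(q^{k−i}−1) for i = 0, 1, …, k−δ−1, innermost first. -/

import Mathlib

open Module

/-- `C` is a constant dimension code in the Grassmannian `G_q(n,k)` with
minimum subspace distance at least `d`: all its elements are `k`-dimensional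
subspaces of `F^n`, and `d_S(U,V) = 2k - 2 dim(U ⊓ V) ≥ d` for distinct `U,V ∈ C`. -/
def IsGrassmannCode (F : Type) [Field F] (n k d : ℕ)
    (C : Finset (Submodule F (Fin n → F))) : Prop :=
  (∀ U ∈ C, finrank F ↥U = k) ∧
  ∀ U ∈ C, ∀ V ∈ C, U ≠ V → d ≤ 2 * k - 2 * finrank F ↥(U ⊓ V)

/-- `A_q(n,d,k)`: the maximum size of an `(n,M,d,k)_q` code. -/
noncomputable def maxCodeSize (F : Type) [Field F] (n d k : ℕ) : ℕ :=
  sSup {M | ∃ C : Finset (Submodule F (Fin n → F)), IsGrassmannCode F n k d C ∧ C.card = M}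

/-- The iterated Johnson bound expression: `J δ = 1` and
`J j = ⌊((q^(n-k+j)-1)/(q^j-1)) ⬝ J (j-1)⌋` for `δ < j ≤ k` (innermost first). -/
noncomputable def johnsonIter (q n k δ : ℕ) : ℕ → ℕ
  | 0 => 1
  | j + 1 =>
    if j + 1 ≤ δ then 1
    else ⌊(((q : ℝ) ^ (n - k + (j + 1)) - 1) / ((q : ℝ) ^ (j + 1) - 1)) *
      (johnsonIter q n k δ j : ℝ)⌋₊

section Aux

open scoped Classical

variable (F : Type) [Field F] [Fintype F]

/-- The set of code sizes is nonempty (the empty code). -/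
lemma codeSet_nonempty (n d k : ℕ) :
    Set.Nonempty {M | ∃ C : Finset (Submodule F (Fin n → F)),
      IsGrassmannCode F n k d C ∧ C.card = M} := by
  refine ⟨0, ∅, ⟨?_, ?_⟩, rfl⟩ <;> simp

/-- The set of code sizes is bounded above. -/
lemma codeSet_bddAbove (n d k : ℕ) :
    BddAbove {M | ∃ C : Finset (Submodule F (Fin n → F)),
      IsGrassmannCode F n k d C ∧ C.card = M} := by
  have : Finite (Submodule F (Fin n → F)) :=
    Finite.of_injective (fun U => (U : Set (Fin n → F))) SetLike.coe_injective
  cases nonempty_fintype (Submodule F (Fin n → F))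
  refine ⟨Fintype.card (Submodule F (Fin n → F)), ?_⟩
  rintro M ⟨C, -, rfl⟩
  exact Finset.card_le_univ C

/-- Base case: with minimum distance `2δ+2`, a code of `δ`-dimensional
subspaces has at most one element. -/
lemma maxCodeSize_base (n δ : ℕ) : maxCodeSize F n (2 * δ + 2) δ ≤ 1 := by
  refine csSup_le (codeSet_nonempty F n (2 * δ + 2) δ) ?_
  rintro M ⟨C, hC, rfl⟩
  refine Finset.card_le_one.2 ?_
  intro U hU V hV
  by_contra hne
  have h := hC.2 U hU V hV hne
  omega

/-- Key quotient step: the subcode of codewords through a fixed nonzero vector `v`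
is at most `A_q(N-1, d, m-1)`. -/
lemma card_filter_mem_le (N m d : ℕ)
    (C : Finset (Submodule F (Fin N → F))) (hC : IsGrassmannCode F N m d C)
    (v : Fin N → F) (hv : v ≠ 0) :
    (C.filter (fun U => v ∈ U)).card ≤ maxCodeSize F (N - 1) d (m - 1) := by
  classical
  set L : Submodule F (Fin N → F) := Submodule.span F {v} with hLdef
  have hQrank : finrank F ((Fin N → F) ⧸ L) = N - 1 := by
    have h1 := Submodule.finrank_quotient_add_finrank L
    rw [finrank_span_singleton hv] at h1
    have h2 : finrank F (Fin N → F) = N := Module.finrank_fin_fun F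
    omega
  obtain ⟨e⟩ : Nonempty (((Fin N → F) ⧸ L) ≃ₗ[F] (Fin (N - 1) → F)) :=
    FiniteDimensional.nonempty_linearEquiv_of_finrank_eq
      (by rw [hQrank, Module.finrank_fin_fun])
  set Φ : Submodule F (Fin N → F) → Submodule F (Fin (N - 1) → F) :=
    fun U => (U.map L.mkQ).map e.toLinearMap with hΦ
  -- rank of the image
  have hrank : ∀ U : Submodule F (Fin N → F), v ∈ U →
      finrank F (Φ U) + 1 = finrank F U := by
    intro U hvU
    have hker : LinearMap.ker (L.mkQ ∘ₗ U.subtype) = L.comap U.subtype := by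
      rw [LinearMap.ker_comp, Submodule.ker_mkQ]
    have hkspan : L.comap U.subtype = Submodule.span F {(⟨v, hvU⟩ : U)} := by
      ext x
      simp only [Submodule.mem_comap, hLdef, Submodule.mem_span_singleton]
      constructor
      · rintro ⟨a, ha⟩
        exact ⟨a, Subtype.ext (by simpa using ha)⟩
      · rintro ⟨a, rfl⟩
        exact ⟨a, by simp⟩
    have hrange : LinearMap.range (L.mkQ ∘ₗ U.subtype) = U.map L.mkQ := by
      rw [LinearMap.range_comp, Submodule.range_subtype]
    have h3 := LinearMap.finrank_range_add_finrank_ker (L.mkQ ∘ₗ U.subtype)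
    have hvne : (⟨v, hvU⟩ : U) ≠ 0 := by
      intro h
      exact hv (by simpa using congrArg Subtype.val h)
    rw [hrange, hker, hkspan, finrank_span_singleton hvne] at h3
    have h4 : finrank F ((U.map L.mkQ).map e.toLinearMap) = finrank F (U.map L.mkQ) :=
      LinearEquiv.finrank_map_eq e _
    show finrank F ↥((U.map L.mkQ).map e.toLinearMap) + 1 = finrank F ↥U
    omega
  -- kernel of mkQ is contained in every subspace containing v
  have hkerle : ∀ U : Submodule F (Fin N → F), v ∈ U → LinearMap.ker L.mkQ ≤ U := by
    intro U hvU
    rw [Submodule.ker_mkQ]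
    exact (Submodule.span_singleton_le_iff_mem v U).2 hvU
  -- injectivity on subspaces containing v
  have hinj : ∀ U : Submodule F (Fin N → F), v ∈ U →
      ∀ V : Submodule F (Fin N → F), v ∈ V → Φ U = Φ V → U = V := by
    intro U hvU V hvV h
    have h2 : U.map L.mkQ = V.map L.mkQ := by
      have h' : (U.map L.mkQ).map e.toLinearMap = (V.map L.mkQ).map e.toLinearMap := h
      have hei : Function.Injective e.toLinearMap := fun a b hab => e.injective hab
      have := congrArg (Submodule.comap e.toLinearMap) h'
      rwa [Submodule.comap_map_eq_of_injective (f := e.toLinearMap) hei,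
        Submodule.comap_map_eq_of_injective (f := e.toLinearMap) hei] at this
    have := congrArg (Submodule.comap L.mkQ) h2
    rwa [Submodule.comap_map_eq_self (hkerle U hvU),
      Submodule.comap_map_eq_self (hkerle V hvV)] at this
  -- Φ sends intersections to intersections
  have hinf : ∀ U : Submodule F (Fin N → F), v ∈ U →
      ∀ V : Submodule F (Fin N → F), v ∈ V → Φ U ⊓ Φ V = Φ (U ⊓ V) := by
    intro U hvU V hvV
    have hsurj : Function.Surjective L.mkQ := Submodule.mkQ_surjective L
    have h1 : U.map L.mkQ ⊓ V.map L.mkQ = (U ⊓ V).map L.mkQ := by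
      have h2 : Submodule.comap L.mkQ (U.map L.mkQ ⊓ V.map L.mkQ) = U ⊓ V := by
        rw [Submodule.comap_inf, Submodule.comap_map_eq_self (hkerle U hvU),
          Submodule.comap_map_eq_self (hkerle V hvV)]
      calc U.map L.mkQ ⊓ V.map L.mkQ
          = (Submodule.comap L.mkQ (U.map L.mkQ ⊓ V.map L.mkQ)).map L.mkQ :=
            (Submodule.map_comap_eq_of_surjective hsurj _).symm
        _ = (U ⊓ V).map L.mkQ := by rw [h2]
    show (U.map L.mkQ).map e.toLinearMap ⊓ (V.map L.mkQ).map e.toLinearMap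
      = ((U ⊓ V).map L.mkQ).map e.toLinearMap
    rw [← Submodule.map_inf e.toLinearMap (fun a b hab => e.injective hab), h1]
  -- the quotient code
  set D := C.filter (fun U => v ∈ U) with hDdef
  have hmemD : ∀ U ∈ D, U ∈ C ∧ v ∈ U := by
    intro U hU
    exact Finset.mem_filter.1 hU
  set C' := D.image Φ with hC'def
  have hinjD : Set.InjOn Φ D := by
    intro U hU V hV h
    exact hinj U (hmemD U hU).2 V (hmemD V hV).2 h
  have hcard : C'.card = D.card := Finset.card_image_of_injOn hinjD
  have hcode : IsGrassmannCode F (N - 1) (m - 1) d C' := by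
    constructor
    · intro U' hU'
      obtain ⟨U, hU, rfl⟩ := Finset.mem_image.1 hU'
      obtain ⟨hUC, hvU⟩ := hmemD U hU
      have h1 := hrank U hvU
      rw [hC.1 U hUC] at h1
      omega
    · intro U' hU' V' hV' hne
      obtain ⟨U, hU, rfl⟩ := Finset.mem_image.1 hU'
      obtain ⟨V, hV, rfl⟩ := Finset.mem_image.1 hV'
      obtain ⟨hUC, hvU⟩ := hmemD U hU
      obtain ⟨hVC, hvV⟩ := hmemD V hV
      have hUV : U ≠ V := fun h => hne (by rw [h])
      have hd := hC.2 U hUC V hVC hUV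
      have h1 : Φ U ⊓ Φ V = Φ (U ⊓ V) := hinf U hvU V hvV
      have h2 := hrank (U ⊓ V) (Submodule.mem_inf.2 ⟨hvU, hvV⟩)
      have hkU : finrank F ↥U = m := hC.1 U hUC
      rw [h1]
      have hm1 : 1 ≤ m := by
        rw [← hkU]
        have : v ∈ U := hvU
        have hpos : finrank F ↥(U ⊓ V) ≤ finrank F ↥U :=
          Submodule.finrank_mono inf_le_left
        omega
      omega
  rw [← hcard]
  exact le_csSup (codeSet_bddAbove F (N - 1) d (m - 1)) ⟨C', hcode, rfl⟩

/-- The Johnson counting step for a single code. -/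
lemma johnson_step (N m d : ℕ) (hm : 1 ≤ m)
    (C : Finset (Submodule F (Fin N → F))) (hC : IsGrassmannCode F N m d C) :
    C.card * (Fintype.card F ^ m - 1) ≤
      (Fintype.card F ^ N - 1) * maxCodeSize F (N - 1) d (m - 1) := by
  classical
  set q := Fintype.card F with hq
  set S : Finset (Fin N → F) := Finset.univ.filter (fun v => v ≠ 0) with hSdef
  have hScard : S.card = q ^ N - 1 := by
    have h1 : S = Finset.univ.erase 0 := by
      ext x; simp [hSdef]
    rw [h1, Finset.card_erase_of_mem (Finset.mem_univ 0), Finset.card_univ]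
    congr 1
    rw [Fintype.card_fun, Fintype.card_fin]
  have key : ∑ U ∈ C, (S.filter (fun v => v ∈ U)).card
      = ∑ v ∈ S, (C.filter (fun U => v ∈ U)).card := by
    simp_rw [Finset.card_filter]
    exact Finset.sum_comm
  have h1 : ∀ U ∈ C, (S.filter (fun v => v ∈ U)).card = q ^ m - 1 := by
    intro U hU
    have e1 : S.filter (fun v => v ∈ U) = (Finset.univ.filter (fun v => v ∈ U)).erase 0 := by
      ext x
      simp [hSdef, Finset.mem_erase, and_comm]
    rw [e1, Finset.card_erase_of_mem (by simp [U.zero_mem])]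
    have e2 : (Finset.univ.filter (fun v => v ∈ U)).card = Fintype.card U := by
      rw [Fintype.card_subtype]
    rw [e2]
    rw [card_eq_pow_finrank (K := F) (V := ↥U), hC.1 U hU]
  have h2 : ∀ v ∈ S, (C.filter (fun U => v ∈ U)).card ≤ maxCodeSize F (N - 1) d (m - 1) := by
    intro v hv
    have hv0 : v ≠ 0 := by
      simpa [hSdef] using hv
    exact card_filter_mem_le F N m d C hC v hv0
  calc C.card * (q ^ m - 1) = ∑ U ∈ C, (q ^ m - 1) := by
        rw [Finset.sum_const, smul_eq_mul]
    _ = ∑ U ∈ C, (S.filter (fun v => v ∈ U)).card := by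
        exact (Finset.sum_congr rfl h1).symm
    _ = ∑ v ∈ S, (C.filter (fun U => v ∈ U)).card := key
    _ ≤ ∑ v ∈ S, maxCodeSize F (N - 1) d (m - 1) := Finset.sum_le_sum h2
    _ = (q ^ N - 1) * maxCodeSize F (N - 1) d (m - 1) := by
        rw [Finset.sum_const, smul_eq_mul, hScard]

end Aux

/-- **Iterated Johnson bound.** `A_q(n,2δ+2,k) ≤ J(k)` where the nested floors run over
the `k-δ` factors `(q^(n-i)-1)/(q^(k-i)-1)`, `i = 0,…,k-δ-1`, innermost first. -/
theorem iterated_johnson_bound (F : Type) [Field F] [Fintype F] (n k δ : ℕ)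
    (hδk : δ ≤ k) (hkn : k ≤ n) :
    maxCodeSize F n (2 * δ + 2) k ≤ johnsonIter (Fintype.card F) n k δ k := by
  have hq2 : 2 ≤ Fintype.card F := Fintype.one_lt_card
  set q := Fintype.card F with hq
  have main : ∀ j, δ ≤ j → j ≤ k →
      maxCodeSize F (n - k + j) (2 * δ + 2) j ≤ johnsonIter q n k δ j := by
    intro j
    induction j with
    | zero =>
      intro h0 _
      have hδ0 : δ = 0 := Nat.le_zero.1 h0
      subst hδ0
      simpa [johnsonIter] using maxCodeSize_base F (n - k + 0) 0
    | succ j ih =>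
      intro hδ hk
      by_cases hcase : j + 1 ≤ δ
      · have hje : δ = j + 1 := le_antisymm hδ hcase
        have hJ : johnsonIter q n k δ (j + 1) = 1 := by
          simp [johnsonIter, hcase]
        rw [hJ, ← hje]
        exact maxCodeSize_base F (n - k + δ) δ
      · have hδj : δ ≤ j := by omega
        have ihj := ih hδj (by omega)
        set N := n - k + (j + 1) with hNdef
        -- extract an optimal code
        obtain ⟨C, hC, hcard⟩ := Nat.sSup_mem (codeSet_nonempty F N (2 * δ + 2) (j + 1))
          (codeSet_bddAbove F N (2 * δ + 2) (j + 1))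
        have hstep := johnson_step F N (j + 1) (2 * δ + 2) (by omega) C hC
        rw [hcard] at hstep
        have hN1 : N - 1 = n - k + j := by omega
        rw [hN1] at hstep
        have hchain : maxCodeSize F N (2 * δ + 2) (j + 1) * (q ^ (j + 1) - 1) ≤
            (q ^ N - 1) * johnsonIter q n k δ j := by
          calc maxCodeSize F N (2 * δ + 2) (j + 1) * (q ^ (j + 1) - 1)
              ≤ (q ^ N - 1) * maxCodeSize F (n - k + j) (2 * δ + 2) j := by
                exact hstep
            _ ≤ (q ^ N - 1) * johnsonIter q n k δ j :=
                Nat.mul_le_mul_left _ ihj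
        have hJ : johnsonIter q n k δ (j + 1) =
            ⌊(((q : ℝ) ^ N - 1) / ((q : ℝ) ^ (j + 1) - 1)) *
              (johnsonIter q n k δ j : ℝ)⌋₊ := by
          simp [johnsonIter, hcase, hNdef]
        rw [hJ]
        apply Nat.le_floor
        have hb : (0 : ℝ) < (q : ℝ) ^ (j + 1) - 1 := by
          have : (2 : ℝ) ≤ (q : ℝ) := by exact_mod_cast hq2
          have h2 : (2 : ℝ) ^ (j + 1) ≤ (q : ℝ) ^ (j + 1) := by
            apply pow_le_pow_left₀ (by norm_num) this
          have h3 : (2 : ℝ) ≤ (2 : ℝ) ^ (j + 1) := by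
            calc (2 : ℝ) = 2 ^ 1 := by norm_num
              _ ≤ 2 ^ (j + 1) := by
                apply pow_le_pow_right₀ (by norm_num)
                omega
          linarith
        rw [div_mul_eq_mul_div, le_div_iff₀ hb]
        have hcast : ((maxCodeSize F N (2 * δ + 2) (j + 1) * (q ^ (j + 1) - 1) : ℕ) : ℝ)
            ≤ (((q ^ N - 1) * johnsonIter q n k δ j : ℕ) : ℝ) := by
          exact_mod_cast hchain
        have hq1j : (1 : ℕ) ≤ q ^ (j + 1) := Nat.one_le_pow _ _ (by omega)
        have hq1N : (1 : ℕ) ≤ q ^ N := Nat.one_le_pow _ _ (by omega)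
        push_cast [Nat.cast_sub hq1j, Nat.cast_sub hq1N] at hcast
        convert hcast using 1 <;> push_cast <;> ring
  have := main k hδk le_rfl
  rwa [Nat.sub_add_cancel hkn] at this
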